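/- Fix an integer k ≥ 1. Let z_a, z_b ∈ ℂ with |z_a| ≠ 1, |z_b| ≠ 1 and z_a ≠ z_b, and suppose the Möbius transformation T is elliptic, i.e. D > 0 and (⟨z_a,z_b⟩ - 1)² < D, with irrational rotation number (1/π)·arccos((⟨z_a,z_b⟩ - 1)/√D). If a T-automorphic continuous function f : S¹ → ℝ vanishes at some point of S¹, then f is identically zero. -/

import Mathlib

open Metric

noncomputable section

/-- The Möbius transformation `T` associated with `z_a, z_b`. -/
def mob (za zb z : ℂ) : ℂ :=
  ((starRingEnd ℂ za * zb - 1) * z + (za - zb)) /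
    ((starRingEnd ℂ za - starRingEnd ℂ zb) * z + (za * starRingEnd ℂ zb - 1))

/-- `|T′(z)|`, the modulus of the complex derivative of `mob za zb`. -/
def mobDeriv (za zb z : ℂ) : ℝ :=
  |(1 - ‖za‖ ^ 2) * (1 - ‖zb‖ ^ 2)| /
    (‖(starRingEnd ℂ za - starRingEnd ℂ zb) * z
      + (za * starRingEnd ℂ zb - 1)‖) ^ 2

/-- A continuous function `f` on the unit circle is `T`-automorphic (with weight
exponent `k-1`) if `f(z) = |T′(z)|^{k-1}·f(T z)` on the circle. -/
def TAutomorphic (k : ℕ) (za zb : ℂ) (f : ℂ → ℝ) : Prop :=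
  ∀ z ∈ sphere (0 : ℂ) 1, f z = (mobDeriv za zb z) ^ (k - 1) * f (mob za zb z)

set_option maxHeartbeats 1600000 in
theorem automorphic_elliptic_irrational_vanishes
    (k : ℕ) (hk : 1 ≤ k) (za zb : ℂ)
    (hza : ‖za‖ ≠ 1) (hzb : ‖zb‖ ≠ 1) (hab : za ≠ zb)
    (hD : 0 < (1 - ‖za‖ ^ 2) * (1 - ‖zb‖ ^ 2))
    (hell : ((starRingEnd ℂ za * zb).re - 1) ^ 2
      < (1 - ‖za‖ ^ 2) * (1 - ‖zb‖ ^ 2))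
    (hirr : Irrational
      (Real.arccos (((starRingEnd ℂ za * zb).re - 1) /
          Real.sqrt ((1 - ‖za‖ ^ 2) * (1 - ‖zb‖ ^ 2))) / Real.pi))
    (f : ℂ → ℝ) (hf : ContinuousOn f (sphere (0 : ℂ) 1))
    (haut : TAutomorphic k za zb f)
    (hzero : ∃ z₀ ∈ sphere (0 : ℂ) 1, f z₀ = 0) :
    ∀ z ∈ sphere (0 : ℂ) 1, f z = 0 := by
  obtain ⟨z₀, hz₀s, hz₀⟩ := hzero
  set D : ℝ := (1 - ‖za‖ ^ 2) * (1 - ‖zb‖ ^ 2) with hDdef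
  set a : ℝ := (starRingEnd ℂ za * zb).re - 1 with hadef
  set μ : ℝ := (starRingEnd ℂ za * zb).im with hμdef
  set θ : ℝ := Real.arccos (a / Real.sqrt D) with hθdef
  set ν : ℝ := Real.sqrt (D - a ^ 2) with hνdef
  have hDa : 0 < D - a ^ 2 := sub_pos.mpr hell
  have hν2 : ν ^ 2 = D - a ^ 2 := Real.sq_sqrt hDa.le
  have hνpos : 0 < ν := Real.sqrt_pos.mpr hDa
  have hzab : za - zb ≠ 0 := sub_ne_zero.mpr hab
  have hs2pos : 0 < Complex.normSq (za - zb) := Complex.normSq_pos.mpr hzab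
  have hs2 : Complex.normSq (za - zb) = μ ^ 2 - ν ^ 2 := by
    rw [hν2, hDdef, hadef, hμdef]
    simp only [Complex.sq_norm, Complex.normSq_apply, Complex.mul_re, Complex.mul_im,
      Complex.sub_re, Complex.sub_im, Complex.conj_re, Complex.conj_im]
    ring
  have hμabs : ν < |μ| := by
    nlinarith [sq_abs μ, abs_nonneg μ, hs2pos, hs2, hνpos]
  set ε : ℝ := if 0 < μ then (-1 : ℝ) else 1 with hεdef
  have hε1 : ε = 1 ∨ ε = -1 := by rw [hεdef]; split_ifs <;> simp
  have hε2 : ε ^ 2 = 1 := by rcases hε1 with h | h <;> rw [h] <;> norm_num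
  have hεμ : ε * μ = -|μ| := by
    rw [hεdef]; split_ifs with h
    · rw [abs_of_pos h]; ring
    · rw [abs_of_nonpos (not_lt.mp h)]; ring
  have hεν : ε * ν ≠ 0 := by
    rcases hε1 with h | h <;> rw [h] <;> simp [hνpos.ne']
  -- complex abbreviations
  set u : ℂ := starRingEnd ℂ za with hu
  set v : ℂ := starRingEnd ℂ zb with hv
  set t : ℂ := (μ : ℂ) * Complex.I with htdef
  set r : ℂ := ((ε * ν : ℝ) : ℂ) * Complex.I with hrdef
  set ac : ℂ := ((a : ℝ) : ℂ) with hacdef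
  set A : ℂ := u - v with hAdef
  set A' : ℂ := za - zb with hA'def
  set al : ℂ := u * zb - 1 with haldef
  set dl : ℂ := za * v - 1 with hdldef
  have hA'ne : A' ≠ 0 := hzab
  have hAconj : A = starRingEnd ℂ A' := by rw [hAdef, hA'def, map_sub, hu, hv]
  have hAne : A ≠ 0 := by rw [hAconj]; simpa using hzab
  have hAA' : A * A' = ((μ ^ 2 - ν ^ 2 : ℝ) : ℂ) := by
    rw [hAconj, ← hs2, mul_comm]
    exact Complex.mul_conj A'
  have h2 : u * zb - za * v = 2 * t := by
    have hc : starRingEnd ℂ (u * zb) = za * v := by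
      rw [map_mul, hu, hv, Complex.conj_conj]
    have h := Complex.sub_conj (u * zb)
    rw [hc, ← hμdef] at h
    rw [h, htdef]; push_cast; ring
  have h3 : ac = al - t := by
    have h := Complex.re_add_im (u * zb)
    rw [← hμdef] at h
    have hre : (((u * zb).re : ℝ) : ℂ) = (a : ℂ) + 1 := by rw [hadef]; push_cast; ring
    rw [hre] at h
    rw [hacdef, haldef, htdef]
    linear_combination h
  have hR : r ^ 2 = t ^ 2 + A * A' := by
    have hc : ((ε * ν : ℝ) : ℂ) ^ 2 = ((ν ^ 2 : ℝ) : ℂ) := by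
      norm_cast; rw [mul_pow, hε2, one_mul]
    rw [hrdef, htdef, hAA', mul_pow, mul_pow, Complex.I_sq, hc]
    push_cast; ring
  have hd : dl = al - 2 * t := by linear_combination -h2
  have hacr : ac + r ≠ 0 := by
    intro h
    have him := congrArg Complex.im h
    simp [hacdef, hrdef] at him
    exact hεν (mul_eq_zero.mpr him)
  have hacrm : ac - r ≠ 0 := by
    intro h
    have him := congrArg Complex.im h
    simp [hacdef, hrdef] at him
    exact hεν (mul_eq_zero.mpr him)
  set p : ℂ := (t + r) / A with hpdef
  set pb : ℂ := -(t + r) / A' with hpbdef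
  set lam : ℂ := (ac - r) / (ac + r) with hlamdef
  have hpc : starRingEnd ℂ p = pb := by
    rw [hpdef, hpbdef, hAconj, map_div₀, Complex.conj_conj, htdef, hrdef]
    rw [map_add, map_mul, map_mul, Complex.conj_ofReal, Complex.conj_ofReal, Complex.conj_I]
    ring
  have hpbc : starRingEnd ℂ pb = p := by rw [← hpc, Complex.conj_conj]
  have htr : t + r = ((μ + ε * ν : ℝ) : ℂ) * Complex.I := by
    rw [htdef, hrdef]; push_cast; ring
  have habs_p : ‖p‖ < 1 := by
    rw [hpdef, norm_div, htr, norm_mul, Complex.norm_I, Complex.norm_real, Real.norm_eq_abs, mul_one]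
    have hAabs : ‖A‖ = ‖A'‖ := by rw [hAconj, Complex.norm_conj]
    have hA'pos : 0 < ‖A'‖ := by
      rw [norm_pos_iff]; exact hA'ne
    rw [hAabs, div_lt_one hA'pos]
    have he : (μ + ε * ν) ^ 2 = μ ^ 2 - 2 * (|μ| * ν) + ν ^ 2 := by
      linear_combination (2 * ν) * hεμ + ν ^ 2 * hε2
    have h1 : (|μ + ε * ν|) ^ 2 < (‖A'‖) ^ 2 := by
      rw [sq_abs, Complex.sq_norm, hs2, he]
      nlinarith [hμabs, hνpos]
    exact lt_of_pow_lt_pow_left₀ 2 hA'pos.le h1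
  have hnormδ : Complex.normSq A + D = Complex.normSq dl := by
    rw [hAdef, hdldef, hu, hv, hDdef]
    simp only [Complex.sq_norm, Complex.normSq_apply, Complex.sub_re, Complex.sub_im,
      Complex.mul_re, Complex.mul_im, Complex.conj_re, Complex.conj_im,
      Complex.one_re, Complex.one_im]
    ring
  have hdenne : ∀ w : ℂ, ‖w‖ = 1 → A * w + dl ≠ 0 := by
    intro w hw heq
    have h1 : dl = -(A * w) := by linear_combination heq
    have hnw : Complex.normSq w = 1 := by rw [← Complex.sq_norm, hw]; norm_num
    have h2' : Complex.normSq dl = Complex.normSq A := by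
      rw [h1, Complex.normSq_neg, Complex.normSq_mul, hnw, mul_one]
    rw [h2'] at hnormδ
    linarith
  have hmobeq : ∀ w : ℂ, mob za zb w = (al * w + A') / (A * w + dl) := by
    intro w
    simp only [mob]
    rfl
  have hcal : starRingEnd ℂ al = dl := by
    rw [haldef, hdldef, map_sub, map_mul, map_one, hu, hv, Complex.conj_conj]
  have hcA' : starRingEnd ℂ A' = A := by rw [hAconj]
  have hcA : starRingEnd ℂ A = A' := by rw [hAconj, Complex.conj_conj]
  have hcdl : starRingEnd ℂ dl = al := by rw [← hcal, Complex.conj_conj]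
  have habs_mob : ∀ w : ℂ, ‖w‖ = 1 → ‖mob za zb w‖ = 1 := by
    intro w hw
    have hzz : w * starRingEnd ℂ w = 1 := by
      have hn : Complex.normSq w = 1 := by rw [← Complex.sq_norm, hw]; norm_num
      rw [Complex.mul_conj, hn, Complex.ofReal_one]
    have hnum : (al * w + A') * starRingEnd ℂ (al * w + A')
        = (A * w + dl) * starRingEnd ℂ (A * w + dl) := by
      rw [map_add, map_add, map_mul, map_mul, hcal, hcA', hcA, hcdl]
      linear_combination (al * dl - A' * A) * hzz
    have h1 : ((Complex.normSq (al * w + A') : ℝ) : ℂ)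
        = ((Complex.normSq (A * w + dl) : ℝ) : ℂ) := by
      rw [← Complex.mul_conj, ← Complex.mul_conj]; exact hnum
    have h2'' := Complex.ofReal_inj.mp h1
    rw [hmobeq w, norm_div, Complex.norm_def, Complex.norm_def, h2'', ← Complex.norm_def,
      div_self]
    exact (norm_ne_zero_iff.mpr (hdenne w hw))
  have he1 : ∀ w : ℂ, (al * w + A') - p * (A * w + dl) = (ac - r) * (w - p) := by
    intro w
    rw [hpdef]
    field_simp
    ring_nf
    linear_combination (-(A * w) + t + r) * h3 + (-(t + r)) * hd - hR
  have he2 : ∀ w : ℂ, (A * w + dl) - pb * (al * w + A') = (ac + r) * (1 - pb * w) := by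
    intro w
    rw [hpbdef]
    field_simp
    ring_nf
    linear_combination (-A' - w * r - w * t) * h3 + A' * hd + (-w) * hR
  have habs_pb : ‖pb‖ = ‖p‖ := by rw [← hpc, Complex.norm_conj]
  have h1mpb : ∀ w : ℂ, ‖w‖ = 1 → 1 - pb * w ≠ 0 := by
    intro w hw h
    have h1 : pb * w = 1 := by linear_combination -h
    have habs1 := congrArg (‖·‖) h1
    rw [norm_mul, hw, mul_one, habs_pb, norm_one] at habs1
    exact absurd habs1 (ne_of_lt habs_p)
  have h1ppb : ∀ w : ℂ, ‖w‖ = 1 → 1 + pb * w ≠ 0 := by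
    intro w hw h
    have h1 : pb * w = -1 := by linear_combination h
    have habs1 := congrArg (‖·‖) h1
    rw [norm_mul, hw, mul_one, habs_pb] at habs1
    simp only [norm_neg, norm_one] at habs1
    exact absurd habs1 (ne_of_lt habs_p)
  have hmub : ∀ w : ℂ, ‖w‖ = 1 →
      (mob za zb w - p) / (1 - pb * mob za zb w) = lam * ((w - p) / (1 - pb * w)) := by
    intro w hw
    have hden := hdenne w hw
    have hfrac1 : (al * w + A') / (A * w + dl) - p = ((ac - r) * (w - p)) / (A * w + dl) := by
      rw [← he1 w, sub_div, mul_div_cancel_right₀ _ hden]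
    have hfrac2 : 1 - pb * ((al * w + A') / (A * w + dl))
        = ((ac + r) * (1 - pb * w)) / (A * w + dl) := by
      rw [← he2 w, sub_div, div_self hden, mul_div_assoc]
    rw [hmobeq w, hfrac1, hfrac2, div_div_div_cancel_right₀]
    · rw [hlamdef, div_mul_div_comm]
    · exact hden
  -- inversion identities
  have hzz1 : ∀ w : ℂ, ‖w‖ = 1 → w * starRingEnd ℂ w = 1 := by
    intro w hw
    have hn : Complex.normSq w = 1 := by rw [← Complex.sq_norm, hw]; norm_num
    rw [Complex.mul_conj, hn, Complex.ofReal_one]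
  have habs_eq : ∀ x y : ℂ, x * starRingEnd ℂ x = y * starRingEnd ℂ y →
      ‖x‖ = ‖y‖ := by
    intro x y h
    have h1 : ((Complex.normSq x : ℝ) : ℂ) = ((Complex.normSq y : ℝ) : ℂ) := by
      rw [← Complex.mul_conj, ← Complex.mul_conj]; exact h
    rw [Complex.norm_def, Complex.norm_def, Complex.ofReal_inj.mp h1]
  have habs_Hf : ∀ w : ℂ, ‖w‖ = 1 →
      ‖(w - p) / (1 - pb * w)‖ = 1 := by
    intro w hw
    have hzz := hzz1 w hw
    have heq : (w - p) * starRingEnd ℂ (w - p)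
        = (1 - pb * w) * starRingEnd ℂ (1 - pb * w) := by
      rw [map_sub, map_sub, map_mul, map_one, hpc, hpbc]
      linear_combination (1 - p * pb) * hzz
    rw [norm_div, habs_eq _ _ heq, div_self]
    exact norm_ne_zero_iff.mpr (h1mpb w hw)
  have habs_Hi : ∀ w : ℂ, ‖w‖ = 1 →
      ‖(w + p) / (1 + pb * w)‖ = 1 := by
    intro w hw
    have hzz := hzz1 w hw
    have heq : (w + p) * starRingEnd ℂ (w + p)
        = (1 + pb * w) * starRingEnd ℂ (1 + pb * w) := by
      rw [map_add, map_add, map_mul, map_one, hpc, hpbc]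
      linear_combination (1 - p * pb) * hzz
    rw [norm_div, habs_eq _ _ heq, div_self]
    exact norm_ne_zero_iff.mpr (h1ppb w hw)
  have hfi : ∀ w : ℂ, ‖w‖ = 1 →
      (((w - p) / (1 - pb * w)) + p) / (1 + pb * ((w - p) / (1 - pb * w))) = w := by
    intro w hw
    have hd1 := h1mpb w hw
    have hd2 := h1ppb _ (habs_Hf w hw)
    rw [div_eq_iff hd2]
    apply mul_right_cancel₀ hd1
    have hq : ((w - p) / (1 - pb * w)) * (1 - pb * w) = w - p := div_mul_cancel₀ _ hd1
    linear_combination (1 - w * pb) * hq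
  have hif : ∀ w : ℂ, ‖w‖ = 1 →
      (((w + p) / (1 + pb * w)) - p) / (1 - pb * ((w + p) / (1 + pb * w))) = w := by
    intro w hw
    have hd1 := h1ppb w hw
    have hd2 := h1mpb _ (habs_Hi w hw)
    rw [div_eq_iff hd2]
    apply mul_right_cancel₀ hd1
    have hq : ((w + p) / (1 + pb * w)) * (1 + pb * w) = w + p := div_mul_cancel₀ _ hd1
    linear_combination (1 + w * pb) * hq
  -- the rotation angle
  have hsqD : 0 < Real.sqrt D := Real.sqrt_pos.mpr hD
  have hDD : Real.sqrt D ^ 2 = D := Real.sq_sqrt hD.le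
  have habsa : |a| ≤ Real.sqrt D := by
    rw [← Real.sqrt_sq_eq_abs]
    exact Real.sqrt_le_sqrt (by linarith)
  have hcos : Real.cos θ = a / Real.sqrt D := by
    rw [hθdef]
    apply Real.cos_arccos
    · rw [le_div_iff₀ hsqD]; linarith [(abs_le.mp habsa).1]
    · rw [div_le_one hsqD]; linarith [(abs_le.mp habsa).2]
  have hsin : Real.sin θ = ν / Real.sqrt D := by
    rw [hθdef, Real.sin_arccos]
    have h1 : 1 - (a / Real.sqrt D) ^ 2 = (ν / Real.sqrt D) ^ 2 := by
      rw [div_pow, div_pow, hDD, hν2, eq_div_iff hD.ne', sub_mul,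
        div_mul_cancel₀ _ hD.ne', one_mul]
    rw [h1, Real.sqrt_sq (by positivity)]
  have hcosεθ : Real.cos (ε * θ) = Real.cos θ := by
    rcases hε1 with h | h <;> rw [h] <;> simp
  have hsinεθ : Real.sin (ε * θ) = ε * Real.sin θ := by
    rcases hε1 with h | h <;> rw [h] <;> simp
  have hexpp : ac + r = ((Real.sqrt D : ℝ) : ℂ) * Complex.exp (((ε * θ : ℝ) : ℂ) * Complex.I) := by
    have hda : a / Real.sqrt D * Real.sqrt D = a := div_mul_cancel₀ _ hsqD.ne'
    have hdν : ν / Real.sqrt D * Real.sqrt D = ν := div_mul_cancel₀ _ hsqD.ne'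
    have h1 : Real.sqrt D * Real.cos (ε * θ) = a := by
      rw [hcosεθ, hcos]; linear_combination hda
    have h2' : Real.sqrt D * Real.sin (ε * θ) = ε * ν := by
      rw [hsinεθ, hsin]; linear_combination ε * hdν
    rw [Complex.exp_mul_I, hacdef, hrdef, mul_add, ← Complex.ofReal_cos, ← Complex.ofReal_sin,
      ← mul_assoc, ← Complex.ofReal_mul, ← Complex.ofReal_mul, h1, h2']
  have hexpm : ac - r = ((Real.sqrt D : ℝ) : ℂ) * Complex.exp (((-(ε * θ) : ℝ) : ℂ) * Complex.I) := by
    have hda : a / Real.sqrt D * Real.sqrt D = a := div_mul_cancel₀ _ hsqD.ne'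
    have hdν : ν / Real.sqrt D * Real.sqrt D = ν := div_mul_cancel₀ _ hsqD.ne'
    have h1 : Real.sqrt D * Real.cos (-(ε * θ)) = a := by
      rw [Real.cos_neg, hcosεθ, hcos]; linear_combination hda
    have h2' : Real.sqrt D * Real.sin (-(ε * θ)) = -(ε * ν) := by
      rw [Real.sin_neg, hsinεθ, hsin]; linear_combination (-ε) * hdν
    rw [Complex.exp_mul_I, hacdef, hrdef, mul_add, ← Complex.ofReal_cos, ← Complex.ofReal_sin,
      ← mul_assoc, ← Complex.ofReal_mul, ← Complex.ofReal_mul, h1, h2']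
    push_cast; ring
  set ω : ℝ := -(2 * ε * θ) with hωdef
  have hsqDne : ((Real.sqrt D : ℝ) : ℂ) ≠ 0 := by
    simpa using hsqD.ne'
  have hlamexp : lam = Complex.exp (((ω : ℝ) : ℂ) * Complex.I) := by
    rw [hlamdef, hexpm, hexpp, mul_div_mul_left _ _ hsqDne, ← Complex.exp_sub]
    congr 1
    rw [hωdef]; push_cast; ring
  have hωirr : Irrational (ω / (2 * Real.pi)) := by
    have hπ : (Real.pi : ℝ) ≠ 0 := Real.pi_ne_zero
    rcases hε1 with h | h
    · have he : ω / (2 * Real.pi) = -(θ / Real.pi) := by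
        rw [hωdef, h]; ring
      rw [he]; exact hirr.neg
    · have he : ω / (2 * Real.pi) = θ / Real.pi := by
        rw [hωdef, h]; ring
      rw [he]; exact hirr
  have hdense : Dense ((AddSubgroup.closure ({ω, 2 * Real.pi} : Set ℝ) : AddSubgroup ℝ) : Set ℝ) := by
    rcases AddSubgroup.dense_or_cyclic (AddSubgroup.closure ({ω, 2 * Real.pi} : Set ℝ)) with
      h | ⟨g0, hg0⟩
    · exact h
    · exfalso
      have hω : ω ∈ AddSubgroup.closure ({ω, 2 * Real.pi} : Set ℝ) :=
        AddSubgroup.subset_closure (by simp)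
      have h2π : 2 * Real.pi ∈ AddSubgroup.closure ({ω, 2 * Real.pi} : Set ℝ) :=
        AddSubgroup.subset_closure (by simp)
      rw [hg0, AddSubgroup.mem_closure_singleton] at hω h2π
      obtain ⟨m, hm⟩ := hω
      obtain ⟨n, hn⟩ := h2π
      rw [zsmul_eq_mul] at hm hn
      have h2πne : (2 * Real.pi) ≠ 0 := by positivity
      have hg0ne : g0 ≠ 0 := by
        rintro rfl
        rw [mul_zero] at hn
        exact h2πne hn.symm
      apply hωirr
      refine ⟨(m : ℚ) / (n : ℚ), ?_⟩
      push_cast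
      rw [← hm, ← hn, mul_div_mul_right _ _ hg0ne]
  -- transfer to the real line via angle coordinates
  set ψ : ℝ → ℂ := fun s : ℝ =>
    (Complex.exp ((s : ℂ) * Complex.I) + p) / (1 + pb * Complex.exp ((s : ℂ) * Complex.I))
    with hψdef
  have habse : ∀ s : ℝ, ‖Complex.exp ((s : ℂ) * Complex.I)‖ = 1 :=
    fun s => Complex.norm_exp_ofReal_mul_I s
  have hψabs : ∀ s : ℝ, ‖ψ s‖ = 1 := by
    intro s
    simp only [hψdef]
    exact habs_Hi _ (habse s)
  have hψmem : ∀ s : ℝ, ψ s ∈ sphere (0 : ℂ) 1 := by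
    intro s
    rw [mem_sphere_zero_iff_norm]
    exact hψabs s
  have hec : Continuous fun s : ℝ => Complex.exp ((s : ℂ) * Complex.I) :=
    Complex.continuous_exp.comp (Complex.continuous_ofReal.mul continuous_const)
  have hψcont : Continuous ψ := by
    rw [hψdef]
    exact Continuous.div (hec.add continuous_const)
      (continuous_const.add (continuous_const.mul hec))
      (fun s => h1ppb _ (habse s))
  set g : ℝ → ℝ := fun s => f (ψ s) with hgdef
  have hgcont : Continuous g := hf.comp_continuous hψcont hψmem
  have hTψ : ∀ s : ℝ, mob za zb (ψ s) = ψ (s + ω) := by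
    intro s
    have hw := habse s
    have hmem := hψabs s
    have hfψ : (ψ s - p) / (1 - pb * ψ s) = Complex.exp ((s : ℂ) * Complex.I) := by
      simp only [hψdef]
      exact hif _ hw
    have hc := hmub (ψ s) hmem
    rw [hfψ] at hc
    have hmabs := habs_mob (ψ s) hmem
    have hinv2 := hfi (mob za zb (ψ s)) hmabs
    rw [hc] at hinv2
    rw [← hinv2]
    have hstep : lam * Complex.exp ((s : ℂ) * Complex.I)
        = Complex.exp (((s + ω : ℝ) : ℂ) * Complex.I) := by
      rw [hlamexp, ← Complex.exp_add]
      congr 1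
      push_cast
      ring
    simp only [hψdef]
    rw [hstep]
  have hmdpos : ∀ s : ℝ, 0 < (mobDeriv za zb (ψ s)) ^ (k - 1) := by
    intro s
    apply pow_pos
    have hne := hdenne (ψ s) (hψabs s)
    simp only [mobDeriv]
    apply div_pos
    · rw [← hDdef, abs_pos]
      exact hD.ne'
    · have : ((starRingEnd ℂ za - starRingEnd ℂ zb) * (ψ s)
          + (za * starRingEnd ℂ zb - 1)) ≠ 0 := hne
      exact pow_pos (norm_pos_iff.mpr this) 2
  have hgω : ∀ s : ℝ, g s = 0 ↔ g (s + ω) = 0 := by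
    intro s
    have haut' := haut (ψ s) (hψmem s)
    rw [hTψ s] at haut'
    simp only [hgdef]
    constructor
    · intro h0
      have h1 := haut'.symm.trans h0
      exact (mul_eq_zero.mp h1).resolve_left (hmdpos s).ne'
    · intro h0
      rw [haut', h0, mul_zero]
  have hg2π : ∀ s : ℝ, g (s + 2 * Real.pi) = g s := by
    intro s
    have hee : ((s + 2 * Real.pi : ℝ) : ℂ) * Complex.I
        = (s : ℂ) * Complex.I + 2 * (Real.pi : ℂ) * Complex.I := by
      push_cast; ring
    simp only [hgdef, hψdef, hee, Complex.exp_add, Complex.exp_two_pi_mul_I, mul_one]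
  have hinvar : ∀ x ∈ AddSubgroup.closure ({ω, 2 * Real.pi} : Set ℝ),
      ∀ s : ℝ, (g s = 0 ↔ g (s + x) = 0) := by
    intro x hx
    refine AddSubgroup.closure_induction ?_ ?_ ?_ ?_ hx
    · intro y hy s
      rcases hy with h | h
      · rw [h]; exact hgω s
      · rw [Set.mem_singleton_iff.mp h, hg2π s]
    · intro s; rw [add_zero]
    · intro y z _ _ hy' hz' s
      refine (hy' s).trans ?_
      have h := hz' (s + y)
      rw [add_assoc] at h
      exact h
    · intro y _ hy' s
      have h := hy' (s + -y)
      rw [neg_add_cancel_right] at h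
      exact h.symm
  -- evaluation of g at angles of points on the circle
  have hgz : ∀ z' : ℂ, ‖z'‖ = 1 →
      g (Complex.arg ((z' - p) / (1 - pb * z'))) = f z' := by
    intro z' hz'
    have habsw : ‖(z' - p) / (1 - pb * z')‖ = 1 := habs_Hf z' hz'
    have hexpw : Complex.exp ((((Complex.arg ((z' - p) / (1 - pb * z'))) : ℝ) : ℂ) * Complex.I)
        = (z' - p) / (1 - pb * z') := by
      have h := Complex.norm_mul_exp_arg_mul_I ((z' - p) / (1 - pb * z'))
      rw [habsw] at h
      simpa using h
    simp only [hgdef, hψdef, hexpw]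
    rw [hfi z' hz']
  have hz₀abs : ‖z₀‖ = 1 := by
    rw [← mem_sphere_zero_iff_norm]
    exact hz₀s
  have hg0 : g (Complex.arg ((z₀ - p) / (1 - pb * z₀))) = 0 := (hgz z₀ hz₀abs).trans hz₀
  -- the zero set of g is everything
  have hall : ∀ x : ℝ, g x = 0 := by
    intro x
    set t₀ : ℝ := Complex.arg ((z₀ - p) / (1 - pb * z₀)) with ht₀
    have hsub : ((AddSubgroup.closure ({ω, 2 * Real.pi} : Set ℝ) : AddSubgroup ℝ) : Set ℝ)
        ⊆ {y : ℝ | g (t₀ + y) = 0} := by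
      intro y hy
      exact (hinvar y hy t₀).mp hg0
    have hcl : IsClosed {y : ℝ | g (t₀ + y) = 0} :=
      isClosed_eq (hgcont.comp (continuous_const.add continuous_id)) continuous_const
    have hx : (x - t₀) ∈ {y : ℝ | g (t₀ + y) = 0} :=
      hcl.closure_subset ((closure_mono hsub) (hdense _))
    have := hx
    simp only [Set.mem_setOf_eq, add_sub_cancel] at this
    exact this
  intro z hzs
  have hzabs : ‖z‖ = 1 := by
    rw [← mem_sphere_zero_iff_norm]
    exact hzs
  rw [← hgz z hzabs]
  exact hall _
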